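/- (Erasing theorem) Let Q be a free abelian group and let g = ⊕_{α∈Q} g_α be a Q-graded Lie algebra over k (so [g_α, g_β] ⊆ g_{α+β} for all α, β ∈ Q) such that Q is generated as a group by the support {α ∈ Q : g_α ≠ 0}. Suppose τ and ρ are k-algebra automorphisms of g satisfying: (i) τ^m = ρ^m = id and τρ = ρτ; (ii) there exists a group homomorphism r : Q → k^× with ρ(x) = r(α)·x for all x ∈ g_α and α ∈ Q; (iii) there exists a group automorphism τ̂ of Q with τ(g_α) = g_{τ̂(α)} for all α ∈ Q. Assume further that for every positive integer d there is a primitive dm-th root of unity ξ_d ∈ k with ξ_d^d = ζ. Then L(g, τρ) and L(g, τ) are isomorphic as Lie algebras over R. -/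

import Mathlib

open scoped TensorProduct
open LaurentPolynomial

set_option maxHeartbeats 1000000
set_option synthInstance.maxHeartbeats 400000

noncomputable section

namespace LoopPaper

variable {k : Type*} [Field k] {g : Type*} [LieRing g] [LieAlgebra k g]

/-- A linear automorphism of a Lie algebra is a Lie algebra automorphism if it
preserves brackets. -/
def IsLieAut (σ : g ≃ₗ[k] g) : Prop := ∀ x y : g, σ ⁅x, y⁆ = ⁅σ x, σ y⁆

theorem IsLieAut.one : IsLieAut (1 : g ≃ₗ[k] g) := fun _ _ => rfl

theorem IsLieAut.mul {σ τ : g ≃ₗ[k] g} (hσ : IsLieAut σ) (hτ : IsLieAut τ) :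
    IsLieAut (σ * τ) := fun x y => by
  show σ (τ ⁅x, y⁆) = ⁅σ (τ x), σ (τ y)⁆
  rw [hτ, hσ]

theorem IsLieAut.inv {σ : g ≃ₗ[k] g} (hσ : IsLieAut σ) : IsLieAut σ⁻¹ := fun x y => by
  apply σ.injective
  have h1 : ∀ z, σ (σ⁻¹ z) = z := fun z => σ.apply_symm_apply z
  rw [h1, hσ, h1, h1]

/-! ### The variable-scaling automorphism `z ↦ c z` of `k[z,z⁻¹]` -/

/-- The unit `c^n • z^n` of the Laurent polynomial ring. -/
def scaleUnit (c : kˣ) (n : ℤ) : (LaurentPolynomial k)ˣ where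
  val := ((c ^ n : kˣ) : k) • T n
  inv := ((c ^ (-n) : kˣ) : k) • T (-n)
  val_inv := by
    rw [smul_mul_smul_comm, ← T_add, ← Units.val_mul, ← zpow_add, add_neg_cancel, zpow_zero,
      Units.val_one, T_zero, one_smul]
  inv_val := by
    rw [smul_mul_smul_comm, ← T_add, ← Units.val_mul, ← zpow_add, neg_add_cancel, zpow_zero,
      Units.val_one, T_zero, one_smul]

/-- The homomorphism `n ↦ c^n • z^n` from `ℤ` to the units of `k[z,z⁻¹]`. -/
def scaleUnitHom (c : kˣ) : Multiplicative ℤ →* (LaurentPolynomial k)ˣ where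
  toFun n := scaleUnit c n.toAdd
  map_one' := Units.ext (by
    show ((c ^ (0 : ℤ) : kˣ) : k) • T (0 : ℤ) = 1
    rw [zpow_zero, Units.val_one, T_zero, one_smul])
  map_mul' a b := Units.ext (by
    show ((c ^ (a.toAdd + b.toAdd) : kˣ) : k) • T (a.toAdd + b.toAdd) =
      (((c ^ a.toAdd : kˣ) : k) • T a.toAdd) * (((c ^ b.toAdd : kˣ) : k) • T b.toAdd)
    rw [smul_mul_smul_comm, ← T_add, ← Units.val_mul, ← zpow_add])

/-- The `k`-algebra endomorphism of `k[z,z⁻¹]` with `z ↦ c z`. -/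
def scaleVar (c : kˣ) : LaurentPolynomial k →ₐ[k] LaurentPolynomial k :=
  AddMonoidAlgebra.lift k _ ℤ ((Units.coeHom _).comp (scaleUnitHom c))

theorem scaleVar_T (c : kˣ) (n : ℤ) : scaleVar c (T n) = ((c ^ n : kˣ) : k) • T n := by
  have h : (T n : LaurentPolynomial k) = AddMonoidAlgebra.of k ℤ (Multiplicative.ofAdd n) := rfl
  rw [h, scaleVar, AddMonoidAlgebra.lift_of]
  rfl

theorem scaleVar_comp (c d : kˣ) :
    (scaleVar c).comp (scaleVar d) = scaleVar (k := k) (c * d) := by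
  refine AddMonoidAlgebra.algHom_ext ?_ (Subsingleton.elim _ _)
  intro n
  have hT : (AddMonoidAlgebra.single n 1 : LaurentPolynomial k) = T n := rfl
  simp only [AlgHom.coe_comp, Function.comp_apply, hT]
  rw [scaleVar_T, map_smul, scaleVar_T, smul_smul, scaleVar_T]
  congr 1
  rw [mul_zpow, Units.val_mul, mul_comm]

theorem scaleVar_id : scaleVar (1 : kˣ) = AlgHom.id k (LaurentPolynomial k) := by
  refine AddMonoidAlgebra.algHom_ext ?_ (Subsingleton.elim _ _)
  intro n
  have hT : (AddMonoidAlgebra.single n 1 : LaurentPolynomial k) = T n := rfl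
  simp only [hT, AlgHom.coe_id, id_eq]
  rw [scaleVar_T, one_zpow, Units.val_one, one_smul]

/-- The `k`-algebra automorphism of `k[z,z⁻¹]` with `z ↦ c z`. -/
def scaleVarEquiv (c : kˣ) : LaurentPolynomial k ≃ₐ[k] LaurentPolynomial k :=
  AlgEquiv.ofAlgHom (scaleVar c) (scaleVar c⁻¹)
    (by rw [scaleVar_comp, mul_inv_cancel, scaleVar_id])
    (by rw [scaleVar_comp, inv_mul_cancel, scaleVar_id])

theorem scaleVarEquiv_apply (c : kˣ) (p : LaurentPolynomial k) :
    scaleVarEquiv c p = scaleVar c p := rfl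


/-- `R = k[t,t⁻¹]`, identified with the `k`-subalgebra of `S = k[z,z⁻¹]` generated by
`t = z^m` and `t⁻¹ = z^{-m}`. -/
def Rsub (k : Type*) [Field k] (m : ℕ) : Subalgebra k (LaurentPolynomial k) :=
  Algebra.adjoin k {T (m : ℤ), T (-(m : ℤ))}

/-- `g(S) = g ⊗_k S` is a Lie algebra over `k` (by restriction from `S`). -/
instance instLieAlgebraTensorBase : LieAlgebra k (LaurentPolynomial k ⊗[k] g) where
  lie_smul c x y := by
    have h := lie_smul (algebraMap k (LaurentPolynomial k) c) x y
    rwa [algebraMap_smul, algebraMap_smul] at h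

/-- The underlying submodule `⊕_{i ∈ ℤ} g_ī ⊗ z^i` of the loop algebra. -/
def loopCarrier (ζ : k) (σ : g ≃ₗ[k] g) : Submodule k (LaurentPolynomial k ⊗[k] g) :=
  Submodule.span k {p | ∃ (i : ℤ) (x : g), σ x = ζ ^ i • x ∧ p = T i ⊗ₜ[k] x}

theorem loop_lie_mem {ζ : k} (hζ0 : ζ ≠ 0) {σ : g ≃ₗ[k] g} (hbr : IsLieAut σ)
    {x y : LaurentPolynomial k ⊗[k] g} (hx : x ∈ loopCarrier ζ σ) (hy : y ∈ loopCarrier ζ σ) :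
    ⁅x, y⁆ ∈ loopCarrier ζ σ := by
  have key : ∀ p ∈ {p : LaurentPolynomial k ⊗[k] g |
      ∃ (i : ℤ) (x : g), σ x = ζ ^ i • x ∧ p = T i ⊗ₜ[k] x},
      ∀ q, q ∈ loopCarrier ζ σ → ⁅p, q⁆ ∈ loopCarrier ζ σ := by
    rintro p ⟨i, a, ha, rfl⟩ q hq
    unfold loopCarrier at hq ⊢
    induction hq using Submodule.span_induction with
    | mem q hq =>
      obtain ⟨j, b, hb, rfl⟩ := hq
      rw [LieAlgebra.ExtendScalars.bracket_tmul, ← T_add]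
      refine Submodule.subset_span ⟨i + j, ⁅a, b⁆, ?_, rfl⟩
      rw [hbr, ha, hb, smul_lie, lie_smul, smul_smul, ← zpow_add₀ hζ0]
    | zero =>
      have h0 : ⁅(T i ⊗ₜ[k] a : LaurentPolynomial k ⊗[k] g), (0 : LaurentPolynomial k ⊗[k] g)⁆ = 0 :=
        lie_zero (T i ⊗ₜ[k] a : LaurentPolynomial k ⊗[k] g)
      rw [h0]; exact zero_mem _
    | add q r _ _ hq hr =>
      have h0 : ⁅(T i ⊗ₜ[k] a : LaurentPolynomial k ⊗[k] g), q + r⁆ = ⁅T i ⊗ₜ[k] a, q⁆ + ⁅T i ⊗ₜ[k] a, r⁆ :=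
        lie_add (T i ⊗ₜ[k] a : LaurentPolynomial k ⊗[k] g) q r
      rw [h0]; exact add_mem hq hr
    | smul c q _ hq =>
      have h0 : ⁅(T i ⊗ₜ[k] a : LaurentPolynomial k ⊗[k] g), c • q⁆ = c • ⁅T i ⊗ₜ[k] a, q⁆ :=
        lie_smul c (T i ⊗ₜ[k] a : LaurentPolynomial k ⊗[k] g) q
      rw [h0]; exact Submodule.smul_mem _ _ hq
  unfold loopCarrier at hx
  induction hx using Submodule.span_induction with
  | mem p hp => exact key p hp y hy
  | zero =>
    have h0 : ⁅(0 : LaurentPolynomial k ⊗[k] g), y⁆ = 0 := zero_lie y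
    rw [h0]; exact zero_mem _
  | add p r _ _ hp hr =>
    have h0 : ⁅p + r, y⁆ = ⁅p, y⁆ + ⁅r, y⁆ := add_lie p r y
    rw [h0]; exact add_mem hp hr
  | smul c p _ hp =>
    have h0 : ⁅c • p, y⁆ = c • ⁅p, y⁆ := smul_lie c p y
    rw [h0]; exact Submodule.smul_mem _ _ hp

/-- The loop algebra `L(g,σ) = ⊕_{i ∈ ℤ} g_ī ⊗ z^i`, a Lie subalgebra (over `k`)
of `g(S) = g ⊗_k S`.  Here `m` is a period of `σ` and `ζ` is the chosen root of unity. -/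
def loopAlgebra (m : ℕ) (ζ : k) (hζ0 : ζ ≠ 0) (hζm : ζ ^ m = 1) (σ : g ≃ₗ[k] g)
    (hbr : IsLieAut σ) (hσ : σ ^ m = 1) : LieSubalgebra k (LaurentPolynomial k ⊗[k] g) where
  __ := loopCarrier ζ σ
  lie_mem' := fun hx hy => loop_lie_mem hζ0 hbr hx hy

theorem mem_loopAlgebra_iff {m : ℕ} {ζ : k} {hζ0 : ζ ≠ 0} {hζm : ζ ^ m = 1} {σ : g ≃ₗ[k] g}
    {hbr : IsLieAut σ} {hσ : σ ^ m = 1} {x : LaurentPolynomial k ⊗[k] g} :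
    x ∈ loopAlgebra m ζ hζ0 hζm σ hbr hσ ↔ x ∈ loopCarrier ζ σ := Iff.rfl

theorem T_smul_loop {ζ : k} (hζ0 : ζ ≠ 0) {σ : g ≃ₗ[k] g} {j : ℤ} (hj : ζ ^ j = 1)
    {x : LaurentPolynomial k ⊗[k] g} (hx : x ∈ loopCarrier ζ σ) :
    (T j : LaurentPolynomial k) • x ∈ loopCarrier ζ σ := by
  unfold loopCarrier at hx ⊢
  induction hx using Submodule.span_induction with
  | mem p hp =>
    obtain ⟨i, a, ha, rfl⟩ := hp
    rw [TensorProduct.smul_tmul', smul_eq_mul, ← T_add]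
    refine Submodule.subset_span ⟨j + i, a, ?_, rfl⟩
    rw [ha, zpow_add₀ hζ0, hj, one_mul]
  | zero => rw [smul_zero]; exact zero_mem _
  | add p q _ _ hp hq => rw [smul_add]; exact add_mem hp hq
  | smul c p _ hp =>
    rw [smul_comm]
    exact Submodule.smul_mem _ _ hp

theorem Rsub_smul_loop {m : ℕ} {ζ : k} (hζ0 : ζ ≠ 0) (hζm : ζ ^ m = 1) {σ : g ≃ₗ[k] g}
    {r : LaurentPolynomial k} (hr : r ∈ Rsub k m) :
    ∀ x ∈ loopCarrier ζ σ, r • x ∈ loopCarrier (g := g) ζ σ := by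
  induction hr using Algebra.adjoin_induction with
  | mem s hs =>
    intro x hx
    rcases hs with rfl | rfl
    · refine T_smul_loop hζ0 ?_ hx
      rw [zpow_natCast, hζm]
    · refine T_smul_loop hζ0 ?_ hx
      rw [zpow_neg, zpow_natCast, hζm, inv_one]
  | algebraMap c =>
    intro x hx
    rw [algebraMap_smul]
    exact Submodule.smul_mem _ _ hx
  | add r s _ _ hr hs =>
    intro x hx
    rw [add_smul]
    exact add_mem (hr x hx) (hs x hx)
  | mul r s _ _ hr hs =>
    intro x hx
    rw [mul_smul]
    exact hr _ (hs x hx)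


/-- The action of `R` on the loop algebra. -/
instance loopSMulR {m : ℕ} {ζ : k} {hζ0 : ζ ≠ 0} {hζm : ζ ^ m = 1} {σ : g ≃ₗ[k] g}
    {hbr : IsLieAut σ} {hσ : σ ^ m = 1} :
    SMul ↥(Rsub k m) ↥(loopAlgebra m ζ hζ0 hζm σ hbr hσ) where
  smul r x := ⟨(r : LaurentPolynomial k) • (x : LaurentPolynomial k ⊗[k] g),
    Rsub_smul_loop hζ0 hζm r.2 _ x.2⟩

theorem loop_smul_coe {m : ℕ} {ζ : k} {hζ0 : ζ ≠ 0} {hζm : ζ ^ m = 1} {σ : g ≃ₗ[k] g}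
    {hbr : IsLieAut σ} {hσ : σ ^ m = 1} (r : ↥(Rsub k m))
    (x : ↥(loopAlgebra m ζ hζ0 hζm σ hbr hσ)) :
    ((r • x : ↥(loopAlgebra m ζ hζ0 hζm σ hbr hσ)) : LaurentPolynomial k ⊗[k] g)
      = (r : LaurentPolynomial k) • (x : LaurentPolynomial k ⊗[k] g) := rfl

/-- The loop algebra is a module over `R = k[t,t⁻¹] ⊆ k[z,z⁻¹]`. -/
instance loopModuleR {m : ℕ} {ζ : k} {hζ0 : ζ ≠ 0} {hζm : ζ ^ m = 1} {σ : g ≃ₗ[k] g}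
    {hbr : IsLieAut σ} {hσ : σ ^ m = 1} :
    Module ↥(Rsub k m) ↥(loopAlgebra m ζ hζ0 hζm σ hbr hσ) where
  one_smul x := Subtype.ext (by simp [loop_smul_coe])
  mul_smul r s x := Subtype.ext (by simp [loop_smul_coe, mul_smul])
  smul_zero r := Subtype.ext (by simp [loop_smul_coe])
  smul_add r x y := Subtype.ext (by simp [loop_smul_coe, smul_add])
  add_smul r s x := Subtype.ext (by simp [loop_smul_coe, add_smul])
  zero_smul x := Subtype.ext (by simp [loop_smul_coe])


/-- The inclusion of the loop algebra in `g(S)`, as an `R`-linear map. -/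
def loopIncl (m : ℕ) (ζ : k) (hζ0 : ζ ≠ 0) (hζm : ζ ^ m = 1) (σ : g ≃ₗ[k] g)
    (hbr : IsLieAut σ) (hσ : σ ^ m = 1) :
    ↥(loopAlgebra m ζ hζ0 hζm σ hbr hσ) →ₗ[↥(Rsub k m)] (LaurentPolynomial k ⊗[k] g) where
  toFun x := ↑x
  map_add' _ _ := rfl
  map_smul' _ _ := rfl

/-- The eigenspace `{x ∈ g : σ(x) = c x}`. -/
def eigSpace (σ : g ≃ₗ[k] g) (c : k) : Submodule k g where
  carrier := {x | σ x = c • x}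
  add_mem' := by
    intro x y hx hy
    show σ (x + y) = c • (x + y)
    rw [map_add, hx, hy, smul_add]
  zero_mem' := by
    show σ 0 = c • (0 : g)
    rw [map_zero, smul_zero]
  smul_mem' := by
    intro t x hx
    show σ (t • x) = c • t • x
    rw [map_smul, hx, smul_comm]

/-- The `R`-algebra automorphism `id ⊗ ι_i` of `g(S)`, where `ι_i(z) = ζ^i z`. -/
def idTensorIota (ζ : k) (hζ0 : ζ ≠ 0) (i : ℤ) :
    (LaurentPolynomial k ⊗[k] g) ≃ₗ[k] (LaurentPolynomial k ⊗[k] g) :=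
  TensorProduct.congr (scaleVarEquiv (Units.mk0 ζ hζ0 ^ i)).toLinearEquiv (LinearEquiv.refl k g)

/-- A `k`-linear automorphism of `g(S)` lies in `Aut_S(g(S))` if it is `S`-linear and
preserves brackets. -/
def IsSAut (f : (LaurentPolynomial k ⊗[k] g) ≃ₗ[k] (LaurentPolynomial k ⊗[k] g)) : Prop :=
  (∀ (s : LaurentPolynomial k) (x : LaurentPolynomial k ⊗[k] g), f (s • x) = s • f x) ∧
    ∀ x y : LaurentPolynomial k ⊗[k] g, f ⁅x, y⁆ = ⁅f x, f y⁆

/-- The action of `ī ∈ Γ = ℤ/mℤ` on `Aut_S(g(S))`:  `ⁱτ = (id ⊗ ι_i) ∘ τ ∘ (id ⊗ ι_i)⁻¹`. -/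
def gammaAct (ζ : k) (hζ0 : ζ ≠ 0) (i : ℤ)
    (τ : (LaurentPolynomial k ⊗[k] g) ≃ₗ[k] (LaurentPolynomial k ⊗[k] g)) :
    (LaurentPolynomial k ⊗[k] g) ≃ₗ[k] (LaurentPolynomial k ⊗[k] g) :=
  ((idTensorIota (g := g) ζ hζ0 i).symm.trans τ).trans (idTensorIota ζ hζ0 i)

/-- A family `u_ī`, `ī ∈ Γ = ℤ/mℤ` (presented as a function on integer representatives),
is a 1-cocycle on `Γ` in `Aut_S(g(S))` if each `u_i` is an `S`-algebra automorphism,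
`u_i` depends only on `i` mod `m`, and `u_{i+j} = u_i ∘ ⁱ(u_j)`. -/
def IsCocycle (m : ℕ) (ζ : k) (hζ0 : ζ ≠ 0)
    (u : ℤ → ((LaurentPolynomial k ⊗[k] g) ≃ₗ[k] (LaurentPolynomial k ⊗[k] g))) : Prop :=
  (∀ i : ℤ, IsSAut (u i)) ∧ (∀ i j : ℤ, (i : ZMod m) = (j : ZMod m) → u i = u j) ∧
    ∀ i j : ℤ, u (i + j) = (gammaAct ζ hζ0 i (u j)).trans (u i)

/-- The fixed point set `g(S)_u = {x : (u_ī ∘ (id ⊗ ι_i)) x = x for all ī}` of a 1-cocycle. -/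
def cocycleFixed (ζ : k) (hζ0 : ζ ≠ 0)
    (u : ℤ → ((LaurentPolynomial k ⊗[k] g) ≃ₗ[k] (LaurentPolynomial k ⊗[k] g))) :
    Set (LaurentPolynomial k ⊗[k] g) :=
  {x | ∀ i : ℤ, u i (idTensorIota ζ hζ0 i x) = x}



/-! ### Auxiliary machinery for the erasing theorem -/

section ErasingAux

/-- The twist `p ⊗ x ↦ ι_u(p) ⊗ σ(x)` of `g(S)`, as a `k`-linear endomorphism. -/
def twistEnd (u : kˣ) (σ : g ≃ₗ[k] g) : Module.End k (LaurentPolynomial k ⊗[k] g) :=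
  TensorProduct.map (scaleVarEquiv (u : kˣ)).toLinearMap σ.toLinearMap

theorem twistEnd_tmul (u : kˣ) (σ : g ≃ₗ[k] g) (p : LaurentPolynomial k) (x : g) :
    twistEnd u σ (p ⊗ₜ[k] x) = scaleVar u p ⊗ₜ[k] σ x := rfl

theorem twistEnd_T_tmul (u : kˣ) (σ : g ≃ₗ[k] g) (i : ℤ) (x : g) :
    twistEnd u σ (T i ⊗ₜ[k] x) = ((u ^ i : kˣ) : k) • (T i ⊗ₜ[k] σ x) := by
  rw [twistEnd_tmul, scaleVar_T, ← TensorProduct.smul_tmul']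

theorem twistEnd_pow_T_tmul (u : kˣ) (σ : g ≃ₗ[k] g) (j : ℕ) (i : ℤ) (x : g) :
    ((twistEnd u σ) ^ j) (T i ⊗ₜ[k] x)
      = (((u ^ i : kˣ) : k) ^ j) • (T i ⊗ₜ[k] (σ ^ j) x) := by
  induction j generalizing x with
  | zero => simp only [pow_zero, Module.End.one_apply, one_smul]; rfl
  | succ n ih =>
      have h1 : (σ ^ (n + 1)) x = (σ ^ n) (σ x) := by rw [pow_succ]; rfl
      rw [pow_succ, Module.End.mul_apply, twistEnd_T_tmul, map_smul, ih (σ x), smul_smul, h1,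
        ← pow_succ']

theorem span_T_tmul_top :
    Submodule.span k {a : LaurentPolynomial k ⊗[k] g | ∃ (i : ℤ) (x : g), a = T i ⊗ₜ[k] x}
      = ⊤ := by
  rw [eq_top_iff]
  rintro a -
  induction a using TensorProduct.induction_on with
  | zero => exact Submodule.zero_mem _
  | tmul p x =>
      induction p using AddMonoidAlgebra.induction_on with
      | of i => exact Submodule.subset_span ⟨i, x, rfl⟩
      | add p q hp hq => rw [TensorProduct.add_tmul]; exact Submodule.add_mem _ hp hq
      | smul c p hp =>
          rw [← TensorProduct.smul_tmul']; exact Submodule.smul_mem _ _ hp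
  | add a b ha hb => exact Submodule.add_mem _ ha hb

theorem span_T_tmul_graded_top {Q : Type*} (G : Q → Submodule k g) (hsup : ⨆ α, G α = ⊤) :
    Submodule.span k {a : LaurentPolynomial k ⊗[k] g |
      ∃ (i : ℤ) (α : Q) (x : g), x ∈ G α ∧ a = T i ⊗ₜ[k] x} = ⊤ := by
  rw [eq_top_iff]
  rintro a -
  induction a using TensorProduct.induction_on with
  | zero => exact Submodule.zero_mem _
  | tmul p x =>
      have hx : x ∈ Submodule.span k (⋃ α, (G α : Set g)) := by
        rw [← Submodule.iSup_eq_span, hsup]; trivial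
      induction hx using Submodule.span_induction with
      | mem y hy =>
          obtain ⟨α, hyα⟩ := Set.mem_iUnion.mp hy
          induction p using AddMonoidAlgebra.induction_on with
          | of i => exact Submodule.subset_span ⟨i, α, y, hyα, rfl⟩
          | add p q hp hq => rw [TensorProduct.add_tmul]; exact Submodule.add_mem _ hp hq
          | smul c p hp =>
              rw [← TensorProduct.smul_tmul']; exact Submodule.smul_mem _ _ hp
      | zero => rw [TensorProduct.tmul_zero]; exact Submodule.zero_mem _
      | add y z _ _ h1 h2 => rw [TensorProduct.tmul_add]; exact Submodule.add_mem _ h1 h2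
      | smul c y _ h => rw [TensorProduct.tmul_smul]; exact Submodule.smul_mem _ _ h
  | add a b ha hb => exact Submodule.add_mem _ ha hb

theorem inv_unit_zpow_val {ζ : k} (hζ0 : ζ ≠ 0) (n : ℤ) :
    ((((Units.mk0 ζ hζ0)⁻¹ : kˣ) ^ n : kˣ) : k) = ζ ^ (-n) := by
  rw [Units.val_zpow_eq_zpow_val]
  simp [inv_zpow', zpow_neg]

theorem carrier_fixed {ζ : k} (hζ0 : ζ ≠ 0) (σ : g ≃ₗ[k] g)
    {a : LaurentPolynomial k ⊗[k] g} (ha : a ∈ loopCarrier ζ σ) :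
    twistEnd (Units.mk0 ζ hζ0)⁻¹ σ a = a := by
  have hle : loopCarrier ζ σ ≤
      LinearMap.eqLocus (twistEnd (Units.mk0 ζ hζ0)⁻¹ σ)
        (LinearMap.id (R := k) (M := LaurentPolynomial k ⊗[k] g)) := by
    apply Submodule.span_le.2
    rintro _ ⟨i, x, hx, rfl⟩
    show twistEnd (Units.mk0 ζ hζ0)⁻¹ σ (T i ⊗ₜ[k] x) = T i ⊗ₜ[k] x
    rw [twistEnd_T_tmul, hx, TensorProduct.tmul_smul, smul_smul, inv_unit_zpow_val hζ0,
      zpow_neg, inv_mul_cancel₀ (zpow_ne_zero _ hζ0), one_smul]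
  exact hle ha

theorem fixed_mem_carrier {m : ℕ} {ζ : k} (hζ0 : ζ ≠ 0) (hζm : ζ ^ m = 1) (hmk : (m : k) ≠ 0)
    (σ : g ≃ₗ[k] g) (hσ : σ ^ m = 1) {a : LaurentPolynomial k ⊗[k] g}
    (ha : twistEnd (Units.mk0 ζ hζ0)⁻¹ σ a = a) : a ∈ loopCarrier ζ σ := by
  set f : Module.End k (LaurentPolynomial k ⊗[k] g) := twistEnd (Units.mk0 ζ hζ0)⁻¹ σ with hf
  set π : Module.End k (LaurentPolynomial k ⊗[k] g)
    := (m : k)⁻¹ • ∑ j ∈ Finset.range m, f ^ j with hπdef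
  have hπmem : ∀ b, π b ∈ loopCarrier ζ σ := by
    have hsub : Submodule.span k
        {b : LaurentPolynomial k ⊗[k] g | ∃ (i : ℤ) (x : g), b = T i ⊗ₜ[k] x}
        ≤ (loopCarrier ζ σ).comap π := by
      apply Submodule.span_le.2
      rintro _ ⟨i, x, rfl⟩
      simp only [Set.mem_setOf_eq, SetLike.mem_coe, Submodule.mem_comap]
      set c : k := ((((Units.mk0 ζ hζ0)⁻¹ : kˣ) ^ i : kˣ) : k) with hc
      have hcz : c * ζ ^ i = 1 := by
        rw [hc, inv_unit_zpow_val hζ0, zpow_neg, inv_mul_cancel₀ (zpow_ne_zero _ hζ0)]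
      set y : g := (m : k)⁻¹ • ∑ j ∈ Finset.range m, c ^ j • (σ ^ j) x with hy
      have hπx : π (T i ⊗ₜ[k] x) = T i ⊗ₜ[k] y := by
        rw [hπdef, hy, LinearMap.smul_apply, LinearMap.sum_apply, TensorProduct.tmul_smul]
        congr 1
        rw [TensorProduct.tmul_sum]
        exact (Finset.sum_congr rfl fun j _ => by
          rw [twistEnd_pow_T_tmul, TensorProduct.tmul_smul]).symm
      have hcm : c ^ m = 1 := by
        have h1 : (c * ζ ^ i) ^ m = 1 := by rw [hcz, one_pow]
        have h2 : (ζ ^ (i : ℤ)) ^ m = 1 := by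
          rw [← zpow_natCast (ζ ^ (i : ℤ)) m, ← zpow_mul, mul_comm, zpow_mul,
            zpow_natCast, hζm, one_zpow]
        rw [mul_pow, h2, mul_one] at h1
        exact h1
      have hσy : σ y = ζ ^ (i : ℤ) • y := by
        have hFm : c ^ m • (σ ^ m) x = c ^ 0 • (σ ^ 0) x := by
          rw [hcm, hσ, pow_zero, pow_zero, one_smul]
        have hre : ∑ j ∈ Finset.range m, c ^ j • (σ ^ (j + 1)) x
            = ζ ^ (i : ℤ) • ∑ j ∈ Finset.range m, c ^ j • (σ ^ j) x := by
          have hterm : ∀ j, c ^ j • (σ ^ (j + 1)) x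
              = ζ ^ (i : ℤ) • (c ^ (j + 1) • (σ ^ (j + 1)) x) := by
            intro j
            rw [smul_smul]
            congr 1
            have hh : ζ ^ (i : ℤ) * c ^ (j + 1) = c ^ j * (c * ζ ^ (i : ℤ)) := by ring
            rw [hh, hcz, mul_one]
          rw [Finset.sum_congr rfl fun j _ => hterm j, ← Finset.smul_sum]
          congr 1
          have h1 := Finset.sum_range_succ' (fun j => c ^ j • (σ ^ j) x) m
          have h2 := Finset.sum_range_succ (fun j => c ^ j • (σ ^ j) x) m
          have h3 : ∑ j ∈ Finset.range m, c ^ (j+1) • (σ ^ (j+1)) x + c ^ 0 • (σ ^ 0) x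
              = ∑ j ∈ Finset.range m, c ^ j • (σ ^ j) x + c ^ m • (σ ^ m) x :=
            h1.symm.trans h2
          rw [hFm] at h3
          exact add_right_cancel h3
        rw [hy, map_smul, map_sum]
        have h4 : ∀ j, σ (c ^ j • (σ ^ j) x) = c ^ j • (σ ^ (j+1)) x := by
          intro j
          rw [map_smul]
          congr 1
          rw [pow_succ']
          rfl
        rw [Finset.sum_congr rfl fun j _ => h4 j, hre, smul_comm]
      rw [hπx]
      exact Submodule.subset_span ⟨i, y, hσy, rfl⟩
    intro b
    have hb : b ∈ Submodule.span k
        {b : LaurentPolynomial k ⊗[k] g | ∃ (i : ℤ) (x : g), b = T i ⊗ₜ[k] x} := by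
      rw [span_T_tmul_top]; trivial
    exact hsub hb
  have hfix : ∀ j : ℕ, (f ^ j) a = a := by
    intro j
    induction j with
    | zero => rfl
    | succ n ih => rw [pow_succ', Module.End.mul_apply, ih, ha]
  have hπa : π a = a := by
    rw [hπdef, LinearMap.smul_apply, LinearMap.sum_apply,
      Finset.sum_congr rfl fun j _ => hfix j, Finset.sum_const, Finset.card_range,
      ← Nat.cast_smul_eq_nsmul k, smul_smul, inv_mul_cancel₀ hmk, one_smul]
  rw [← hπa]
  exact hπmem a

section WMap

variable {Q : Type*} [AddCommGroup Q] [DecidableEq Q] (G : Q → Submodule k g)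

/-- The `k`-linear map `x_α ↦ (s(α)·T^{ν(α)}) ⊗ x_α` defined from the grading. -/
def twLift (hint : DirectSum.IsInternal G) (s : Q → kˣ) (ν : Q → ℤ) :
    g →ₗ[k] LaurentPolynomial k ⊗[k] g :=
  (DirectSum.toModule k Q _ fun α =>
      (TensorProduct.mk k (LaurentPolynomial k) g (((s α : k)) • T (ν α))).comp
        (G α).subtype).comp
    ((LinearEquiv.ofBijective (DirectSum.coeLinearMap G) hint).symm.toLinearMap)

theorem twLift_apply (hint : DirectSum.IsInternal G) (s : Q → kˣ) (ν : Q → ℤ)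
    {α : Q} {x : g} (hx : x ∈ G α) :
    twLift G hint s ν x = ((s α : k) • T (ν α)) ⊗ₜ[k] x := by
  have h1 : (LinearEquiv.ofBijective (DirectSum.coeLinearMap G) hint).symm x
      = DirectSum.lof k Q (fun α => ↥(G α)) α ⟨x, hx⟩ := by
    rw [LinearEquiv.symm_apply_eq]
    show x = DirectSum.coeLinearMap G _
    rw [DirectSum.lof_eq_of,
      DirectSum.coeLinearMap_of]
  rw [twLift, LinearMap.comp_apply, LinearEquiv.coe_toLinearMap, h1, DirectSum.toModule_lof]
  rfl

/-- The monomial `S`-linear endomorphism `p ⊗ x_α ↦ s(α) • ((p·T^{ν(α)}) ⊗ x_α)`. -/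
def wMap (hint : DirectSum.IsInternal G) (s : Q → kˣ) (ν : Q → ℤ) :
    LaurentPolynomial k ⊗[k] g →ₗ[LaurentPolynomial k] LaurentPolynomial k ⊗[k] g :=
  LinearMap.liftBaseChange _ (twLift G hint s ν)

theorem wMap_tmul (hint : DirectSum.IsInternal G) (s : Q → kˣ) (ν : Q → ℤ)
    {α : Q} {x : g} (hx : x ∈ G α) (p : LaurentPolynomial k) :
    wMap G hint s ν (p ⊗ₜ[k] x) = (s α : k) • ((p * T (ν α)) ⊗ₜ[k] x) := by
  rw [wMap, LinearMap.liftBaseChange_tmul, twLift_apply G hint s ν hx,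
    TensorProduct.smul_tmul', smul_comm p ((s α : k)) (T (ν α)), smul_eq_mul,
    ← TensorProduct.smul_tmul']

theorem wMap_cancel (hint : DirectSum.IsInternal G) (s t : Q → kˣ) (ν μ : Q → ℤ)
    (hts : ∀ α, (t α : k) * (s α : k) = 1) (hμν : ∀ α, ν α + μ α = 0) :
    ∀ a, wMap G hint t μ (wMap G hint s ν a) = a := by
  have hsp := span_T_tmul_graded_top G hint.submodule_iSup_eq_top
  have hmaps : ((wMap G hint t μ).restrictScalars k) ∘ₗ ((wMap G hint s ν).restrictScalars k)
      = LinearMap.id := by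
    apply LinearMap.ext_on hsp
    rintro _ ⟨i, α, x, hx, rfl⟩
    simp only [LinearMap.comp_apply, LinearMap.coe_restrictScalars, LinearMap.id_apply]
    rw [wMap_tmul G hint s ν hx, LinearMap.map_smul_of_tower, wMap_tmul G hint t μ hx,
      smul_smul, mul_comm ((s α : k)) ((t α : k)), hts α, one_smul,
      mul_assoc, ← T_add, hμν α, T_zero, mul_one]
  intro a
  exact DFunLike.congr_fun hmaps a

theorem wMap_bracket (hint : DirectSum.IsInternal G)
    (hgraded : ∀ (α β : Q), ∀ x ∈ G α, ∀ y ∈ G β, ⁅x, y⁆ ∈ G (α + β))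
    (s : Q → kˣ) (ν : Q → ℤ) (hs : ∀ α β, s (α + β) = s α * s β)
    (hν : ∀ α β, ν (α + β) = ν α + ν β) :
    ∀ a b, wMap G hint s ν ⁅a, b⁆ = ⁅wMap G hint s ν a, wMap G hint s ν b⁆ := by
  have hsp := span_T_tmul_graded_top G hint.submodule_iSup_eq_top
  set w := wMap G hint s ν with hw
  have key : ∀ (i : ℤ) (α : Q) (x : g), x ∈ G α →
      ∀ b, w ⁅(T i ⊗ₜ[k] x : LaurentPolynomial k ⊗[k] g), b⁆
        = ⁅w (T i ⊗ₜ[k] x : LaurentPolynomial k ⊗[k] g), w b⁆ := by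
    intro i α x hx
    have hmaps : (w.restrictScalars k) ∘ₗ
          (LieAlgebra.ad k (LaurentPolynomial k ⊗[k] g) (T i ⊗ₜ[k] x))
        = (LieAlgebra.ad k (LaurentPolynomial k ⊗[k] g) (w (T i ⊗ₜ[k] x))) ∘ₗ
            (w.restrictScalars k) := by
      apply LinearMap.ext_on hsp
      rintro _ ⟨j, β, y, hy, rfl⟩
      simp only [LinearMap.comp_apply, LinearMap.coe_restrictScalars, LieAlgebra.ad_apply]
      rw [LieAlgebra.ExtendScalars.bracket_tmul, wMap_tmul G hint s ν
        (hgraded α β x hx y hy), wMap_tmul G hint s ν hx, wMap_tmul G hint s ν hy]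
      have hsl := smul_lie ((s α : k)) ((T i * T (ν α) : LaurentPolynomial k) ⊗ₜ[k] x)
        ((s β : k) • ((T j * T (ν β) : LaurentPolynomial k) ⊗ₜ[k] y))
      have hls := lie_smul ((s β : k)) ((T i * T (ν α) : LaurentPolynomial k) ⊗ₜ[k] x)
        ((T j * T (ν β) : LaurentPolynomial k) ⊗ₜ[k] y)
      rw [hsl, hls, LieAlgebra.ExtendScalars.bracket_tmul, smul_smul, hs, hν, Units.val_mul]
      rw [show (T i * T j * T (ν α + ν β) : LaurentPolynomial k)
          = T i * T (ν α) * (T j * T (ν β)) by rw [T_add]; ring]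
    intro b
    have := DFunLike.congr_fun hmaps b
    simpa only [LinearMap.comp_apply, LinearMap.coe_restrictScalars, LieAlgebra.ad_apply] using this
  intro a b
  have ha : a ∈ Submodule.span k {a : LaurentPolynomial k ⊗[k] g |
      ∃ (i : ℤ) (α : Q) (x : g), x ∈ G α ∧ a = T i ⊗ₜ[k] x} := by
    rw [hsp]; trivial
  induction ha using Submodule.span_induction with
  | mem a' ha' =>
      obtain ⟨i, α, x, hx, rfl⟩ := ha'
      exact key i α x hx b
  | zero =>
      have hz : ⁅(0 : LaurentPolynomial k ⊗[k] g), b⁆ = 0 := zero_lie b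
      rw [hz, map_zero]
      exact (zero_lie (w b)).symm
  | add a₁ a₂ _ _ h1 h2 =>
      have hadd : ⁅a₁ + a₂, b⁆ = ⁅a₁, b⁆ + ⁅a₂, b⁆ := add_lie a₁ a₂ b
      rw [hadd, map_add, map_add, h1, h2]
      exact (add_lie (w a₁) (w a₂) (w b)).symm
  | smul c a' _ h =>
      have hsm : ⁅c • a', b⁆ = c • ⁅a', b⁆ := smul_lie c a' b
      rw [hsm, LinearMap.map_smul_of_tower, h, LinearMap.map_smul_of_tower]
      exact (smul_lie c (w a') (w b)).symm

theorem wMap_twist {ζ : k} (hζ0 : ζ ≠ 0) (hint : DirectSum.IsInternal G)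
    (τ ρ : g ≃ₗ[k] g) (τhat : Q ≃+ Q) (r s : Q → kˣ) (ν : Q → ℤ)
    (hτmem : ∀ (α : Q) (x : g), x ∈ G α → τ x ∈ G (τhat α))
    (hAd : ∀ (α : Q), ∀ x ∈ G α, ρ x = ((r α : k)) • x)
    (hνinv : ∀ α, ν (τhat α) = ν α)
    (hE : ∀ α, (r α : k) * ((s (τhat α) : k)) = (s α : k) * ζ ^ (-(ν α))) :
    ∀ a, wMap G hint s ν (twistEnd (Units.mk0 ζ hζ0)⁻¹ (τ * ρ) a)
        = twistEnd (Units.mk0 ζ hζ0)⁻¹ τ (wMap G hint s ν a) := by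
  have hsp := span_T_tmul_graded_top G hint.submodule_iSup_eq_top
  set w := wMap G hint s ν with hw
  have hmaps : (w.restrictScalars k) ∘ₗ (twistEnd (Units.mk0 ζ hζ0)⁻¹ (τ * ρ))
      = (twistEnd (Units.mk0 ζ hζ0)⁻¹ τ) ∘ₗ (w.restrictScalars k) := by
    apply LinearMap.ext_on hsp
    rintro _ ⟨i, α, x, hx, rfl⟩
    simp only [LinearMap.comp_apply, LinearMap.coe_restrictScalars]
    have h1 : (τ * ρ) x = (r α : k) • τ x := by
      show τ (ρ x) = _
      rw [hAd α x hx, map_smul]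
    rw [twistEnd_T_tmul, h1, TensorProduct.tmul_smul, LinearMap.map_smul_of_tower,
      LinearMap.map_smul_of_tower, wMap_tmul G hint s ν (hτmem α x hx), hνinv, ← T_add]
    rw [wMap_tmul G hint s ν hx, map_smul, ← T_add, twistEnd_T_tmul]
    rw [smul_smul, smul_smul, smul_smul]
    congr 1
    rw [inv_unit_zpow_val hζ0, inv_unit_zpow_val hζ0]
    rw [mul_assoc, hE α, neg_add, zpow_add₀ hζ0]
    ring
  intro a
  exact DFunLike.congr_fun hmaps a

end WMap

/-- Property closure under the subgroup generated by a set. -/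
theorem closure_prop {Q : Type*} [AddCommGroup Q] {Supp : Set Q}
    (hsupport : AddSubgroup.closure Supp = ⊤) {P : Q → Prop}
    (hmem : ∀ a ∈ Supp, P a) (h0 : P 0)
    (hadd : ∀ a b, P a → P b → P (a + b)) (hneg : ∀ a, P a → P (-a)) :
    ∀ a, P a := by
  intro a
  have ha : a ∈ AddSubgroup.closure Supp := by rw [hsupport]; trivial
  exact AddSubgroup.closure_induction (p := fun x _ => P x) hmem h0
    (fun x y _ _ hx hy => hadd x y hx hy) (fun x _ hx => hneg x hx) ha

section Iterate

variable {Q : Type*} [AddCommGroup Q] (τhat : Q ≃+ Q)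

theorem iterate_add (j : ℕ) (a b : Q) :
    (⇑τhat)^[j] (a + b) = (⇑τhat)^[j] a + (⇑τhat)^[j] b := by
  induction j with
  | zero => rfl
  | succ n ih => rw [Function.iterate_succ_apply', Function.iterate_succ_apply',
      Function.iterate_succ_apply', ih, map_add]

theorem iterate_zero' (j : ℕ) : (⇑τhat)^[j] (0 : Q) = 0 := by
  induction j with
  | zero => rfl
  | succ n ih => rw [Function.iterate_succ_apply', ih, map_zero]

theorem iterate_neg (j : ℕ) (a : Q) : (⇑τhat)^[j] (-a) = -(⇑τhat)^[j] a := by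
  induction j with
  | zero => rfl
  | succ n ih => rw [Function.iterate_succ_apply', Function.iterate_succ_apply', ih, map_neg]

end Iterate

/-- Existence of the multiplier `s` and the invariant exponent `ν` solving
`r(α)·s(τ̂α) = s(α)·ζ^{-ν(α)}`. -/
theorem exists_s_nu {Q : Type*} [AddCommGroup Q] [Module.Free ℤ Q]
    (m : ℕ) (hm : 0 < m) {ζ : k} (hζ : IsPrimitiveRoot ζ m)
    (τhat : Q ≃+ Q) (hφm : ∀ α, (⇑τhat)^[m] α = α)
    (r : Q → kˣ) (hr : ∀ α β : Q, r (α + β) = r α * r β)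
    (hrm : ∀ α, (r α) ^ m = 1) (hrinv : ∀ α, r (τhat α) = r α)
    (hroots : ∀ d : ℕ, 0 < d → ∃ ξ : k, IsPrimitiveRoot ξ (d * m) ∧ ξ ^ d = ζ) :
    ∃ (s : Q → kˣ) (ν : Q → ℤ), (∀ α β, s (α + β) = s α * s β) ∧
      (∀ α β, ν (α + β) = ν α + ν β) ∧ (∀ α, ν (τhat α) = ν α) ∧
      (∀ α, (r α : k) * ((s (τhat α) : k)) = (s α : k) * ζ ^ (-(ν α))) := by
  classical
  haveI : NeZero m := ⟨hm.ne'⟩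
  have hζ0 : ζ ≠ 0 := hζ.ne_zero hm.ne'
  set ζu : kˣ := Units.mk0 ζ hζ0 with hζu
  set B := Module.Free.chooseBasis ℤ Q with hB
  have hri : ∀ i, (((r (B i))⁻¹ : kˣ) : k) ^ m = 1 := by
    intro i
    have : ((r (B i))⁻¹ : kˣ) ^ m = 1 := by rw [inv_pow, hrm, inv_one]
    calc (((r (B i))⁻¹ : kˣ) : k) ^ m = ((((r (B i))⁻¹ : kˣ) ^ m : kˣ) : k) := by
          rw [Units.val_pow_eq_pow_val]
      _ = 1 := by rw [this, Units.val_one]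
  set jfun : Module.Free.ChooseBasisIndex ℤ Q → ℤ :=
    fun i => ((hζ.eq_pow_of_pow_eq_one (hri i)).choose : ℤ) with hjfun
  have hjspec : ∀ i, ζu ^ (jfun i) = (r (B i))⁻¹ := by
    intro i
    obtain ⟨-, hspec⟩ := (hζ.eq_pow_of_pow_eq_one (hri i)).choose_spec
    apply Units.ext
    rw [Units.val_zpow_eq_zpow_val, hjfun]
    simpa [zpow_natCast, ζu] using hspec
  set bh : Q →ₗ[ℤ] ℤ := B.constr ℤ jfun with hbhdef
  -- `ζ^{bh α} = r(α)⁻¹` for all `α`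
  have r0 : r 0 = 1 := by
    have := hr 0 0
    rw [add_zero] at this
    exact (left_eq_mul.mp this)
  have hbh : ∀ α, ζu ^ (bh α) = (r α)⁻¹ := by
    set f₁ : Q →ₗ[ℤ] Additive kˣ :=
      (LinearMap.toSpanSingleton ℤ (Additive kˣ) (Additive.ofMul ζu)).comp bh with hf₁
    set f₂ : Q →ₗ[ℤ] Additive kˣ :=
      AddMonoidHom.toIntLinearMap
        { toFun := fun α => Additive.ofMul ((r α)⁻¹ : kˣ)
          map_zero' := by show Additive.ofMul ((r 0)⁻¹ : kˣ) = 0; rw [r0, inv_one]; rfl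
          map_add' := fun a b => by
            show Additive.ofMul ((r (a + b))⁻¹ : kˣ) = _
            rw [hr, mul_inv]
            rfl } with hf₂
    have heq : f₁ = f₂ := by
      apply B.ext
      intro i
      show (bh (B i)) • Additive.ofMul ζu = Additive.ofMul ((r (B i))⁻¹ : kˣ)
      rw [hbhdef, Module.Basis.constr_basis]
      apply Additive.toMul.injective
      rw [toMul_zsmul]
      simpa using hjspec i
    intro α
    have h := DFunLike.congr_fun heq α
    have h1 : f₁ α = Additive.ofMul (ζu ^ (bh α)) := by
      show (bh α) • Additive.ofMul ζu = _
      apply Additive.toMul.injective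
      rw [toMul_zsmul]
      rfl
    rw [h1] at h
    exact Additive.ofMul.injective h
  have hdvd : ∀ α, (m : ℤ) ∣ (bh (τhat α) - bh α) := by
    intro α
    have h1 : ζu ^ (bh (τhat α) - bh α) = 1 := by
      rw [zpow_sub, hbh, hbh, hrinv, mul_inv_cancel]
    have h2 : ζ ^ (bh (τhat α) - bh α) = 1 := by
      have := congrArg Units.val h1
      rwa [Units.val_zpow_eq_zpow_val, Units.val_one] at this
    exact (hζ.zpow_eq_one_iff_dvd _).mp h2
  have hdvd_iter : ∀ (j : ℕ) (α : Q), (m : ℤ) ∣ bh ((⇑τhat)^[j] α) - bh α := by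
    intro j α
    induction j with
    | zero => simp
    | succ n ih =>
        have h1 : bh ((⇑τhat)^[n+1] α) - bh α
            = (bh (τhat ((⇑τhat)^[n] α)) - bh ((⇑τhat)^[n] α)) + (bh ((⇑τhat)^[n] α) - bh α) := by
          rw [Function.iterate_succ_apply']
          ring
        rw [h1]
        exact dvd_add (hdvd _) ih
  set nfun : Q → ℤ := fun α => ∑ j ∈ Finset.range m, bh ((⇑τhat)^[j] α) with hnfun
  have hnd : ∀ α, (m : ℤ) ∣ nfun α := by
    intro α
    have h1 : nfun α = (∑ j ∈ Finset.range m, (bh ((⇑τhat)^[j] α) - bh α)) + (m : ℤ) * bh α := by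
      rw [Finset.sum_sub_distrib, Finset.sum_const, Finset.card_range]
      push_cast
      ring
    rw [h1]
    exact dvd_add (Finset.dvd_sum fun j _ => hdvd_iter j α) (dvd_mul_right _ _)
  set ν : Q → ℤ := fun α => nfun α / m with hν
  have hνm : ∀ α, (m : ℤ) * ν α = nfun α := fun α => Int.mul_ediv_cancel' (hnd α)
  have hmz : (m : ℤ) ≠ 0 := Int.natCast_ne_zero.mpr hm.ne'
  have nfun_add : ∀ α β, nfun (α + β) = nfun α + nfun β := by
    intro α β
    rw [hnfun]
    simp only []
    rw [← Finset.sum_add_distrib]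
    exact Finset.sum_congr rfl fun j _ => by rw [iterate_add τhat j, map_add]
  have hνadd : ∀ α β, ν (α + β) = ν α + ν β := by
    intro α β
    apply mul_left_cancel₀ hmz
    rw [hνm, nfun_add, mul_add, hνm, hνm]
  have hstep : ∀ (j : ℕ) (α : Q), (⇑τhat)^[j] (τhat α) = (⇑τhat)^[j+1] α := by
    intro j α
    rw [Function.iterate_succ_apply]
  have nfun_inv : ∀ α, nfun (τhat α) = nfun α := by
    intro α
    have h1 := Finset.sum_range_succ' (fun j => bh ((⇑τhat)^[j] α)) m
    have h2 := Finset.sum_range_succ (fun j => bh ((⇑τhat)^[j] α)) m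
    have hFm : bh ((⇑τhat)^[m] α) = bh ((⇑τhat)^[0] α) := by rw [hφm α]; rfl
    have h3 : nfun (τhat α) = ∑ j ∈ Finset.range m, bh ((⇑τhat)^[j+1] α) := by
      rw [hnfun]
      exact Finset.sum_congr rfl fun j _ => by rw [hstep]
    rw [h3, hnfun]
    rw [hFm] at h2
    linarith [h1, h2]
  have hνinv : ∀ α, ν (τhat α) = ν α := by
    intro α
    apply mul_left_cancel₀ hmz
    rw [hνm, hνm, nfun_inv]
  set afun : Q → ℤ := fun α => ∑ j ∈ Finset.range m, (j : ℤ) * bh ((⇑τhat)^[j] α) with hafun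
  have afun_add : ∀ α β, afun (α + β) = afun α + afun β := by
    intro α β
    rw [hafun]
    simp only []
    rw [← Finset.sum_add_distrib]
    exact Finset.sum_congr rfl fun j _ => by rw [iterate_add τhat j, map_add]; ring
  have ID1 : ∀ α, afun (τhat α) = afun α + (m : ℤ) * bh α - nfun α := by
    intro α
    have h3 : afun (τhat α) = ∑ j ∈ Finset.range m, (j : ℤ) * bh ((⇑τhat)^[j+1] α) := by
      rw [hafun]
      exact Finset.sum_congr rfl fun j _ => by rw [hstep]
    have h4 : ∑ j ∈ Finset.range m, ((j : ℤ) * bh ((⇑τhat)^[j+1] α) + bh ((⇑τhat)^[j+1] α))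
        = ∑ j ∈ Finset.range m, ((j : ℤ) + 1) * bh ((⇑τhat)^[j+1] α) :=
      Finset.sum_congr rfl fun j _ => by ring
    have h5 := Finset.sum_range_succ' (fun j => (j : ℤ) * bh ((⇑τhat)^[j] α)) m
    have h6 := Finset.sum_range_succ (fun j => (j : ℤ) * bh ((⇑τhat)^[j] α)) m
    have h7 : ∀ j : ℕ, ((j+1 : ℕ) : ℤ) * bh ((⇑τhat)^[j+1] α)
        = ((j : ℤ) + 1) * bh ((⇑τhat)^[j+1] α) := fun j => by push_cast; ring
    have h8 : ∑ j ∈ Finset.range m, ((j+1 : ℕ) : ℤ) * bh ((⇑τhat)^[j+1] α)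
        = ∑ j ∈ Finset.range m, ((j : ℤ) + 1) * bh ((⇑τhat)^[j+1] α) :=
      Finset.sum_congr rfl fun j _ => h7 j
    have h9 : bh ((⇑τhat)^[m] α) = bh α := by rw [hφm α]
    have h10 : nfun (τhat α) = ∑ j ∈ Finset.range m, bh ((⇑τhat)^[j+1] α) := by
      rw [hnfun]
      exact Finset.sum_congr rfl fun j _ => by rw [hstep]
    have h11 := nfun_inv α
    have h12 := Finset.sum_add_distrib (s := Finset.range m)
      (f := fun j => (j : ℤ) * bh ((⇑τhat)^[j+1] α)) (g := fun j => bh ((⇑τhat)^[j+1] α))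
    rw [h3, hafun]
    simp only [Nat.cast_add, Nat.cast_zero, Nat.cast_one, zero_mul, add_zero] at h5 h6 ⊢
    rw [h9] at h6
    linarith [h4, h5, h6, h8, h10, h11, h12]
  obtain ⟨ξ, hξprim, hξm⟩ := hroots m hm
  have hξ0 : ξ ≠ 0 := by
    intro h
    rw [h, zero_pow hm.ne'] at hξm
    exact hζ0 hξm.symm
  set ξu : kˣ := Units.mk0 ξ hξ0 with hξu
  have hξum : ξu ^ (m : ℤ) = ζu := by
    apply Units.ext
    rw [Units.val_zpow_eq_zpow_val]
    show ξ ^ (m : ℤ) = ζ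
    rw [zpow_natCast, hξm]
  refine ⟨fun α => ξu ^ afun α, ν, ?_, hνadd, hνinv, ?_⟩
  · intro α β
    show ξu ^ afun (α + β) = ξu ^ afun α * ξu ^ afun β
    rw [afun_add, zpow_add]
  · intro α
    show (r α : k) * ((ξu ^ afun (τhat α) : kˣ) : k) = ((ξu ^ afun α : kˣ) : k) * ζ ^ (-(ν α))
    have hsτ : ξu ^ afun (τhat α) = ξu ^ afun α * (r α)⁻¹ * ζu ^ (-(ν α)) := by
      rw [ID1 α, zpow_sub, zpow_add, zpow_mul, hξum, hbh, ← hνm α, zpow_mul, hξum,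
        ← zpow_neg]
    have hu : r α * ξu ^ afun (τhat α) = ξu ^ afun α * ζu ^ (-(ν α)) := by
      rw [hsτ, ← mul_assoc, ← mul_assoc, mul_comm (r α) (ξu ^ afun α), mul_assoc
        (ξu ^ afun α) (r α) ((r α)⁻¹), mul_inv_cancel, mul_one]
    have := congrArg Units.val hu
    rw [Units.val_mul, Units.val_mul, Units.val_zpow_eq_zpow_val ζu] at this
    exact this

end ErasingAux

/-- **Erasing theorem.**  Let `g = ⊕_{α ∈ Q} g_α` be graded by a free
abelian group `Q` generated by the support of `g`.  If `τ, ρ` are automorphisms of `g`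
with `τ^m = ρ^m = 1`, `τρ = ρτ`, `ρ = Ad(r)` for a homomorphism `r : Q → k^×`, and
`τ` permutes the graded pieces via a group automorphism `τ̂` of `Q`, then
`L(g,τρ)` and `L(g,τ)` are isomorphic as Lie algebras over `R` (assuming compatible
primitive roots of unity of all orders `dm` exist in `k`). -/
theorem statement18 {k : Type*} [Field k] [CharZero k] {g : Type*} [LieRing g] [LieAlgebra k g]
    (m : ℕ) (hm : 0 < m) (ζ : k) (hζ : IsPrimitiveRoot ζ m)
    {Q : Type*} [AddCommGroup Q] [DecidableEq Q] [Module.Free ℤ Q]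
    (G : Q → Submodule k g)
    (hinternal : DirectSum.IsInternal G)
    (hsupport : AddSubgroup.closure {α : Q | G α ≠ ⊥} = ⊤)
    (hgraded : ∀ (α β : Q), ∀ x ∈ G α, ∀ y ∈ G β, ⁅x, y⁆ ∈ G (α + β))
    (τ ρ : g ≃ₗ[k] g) (hbrτ : IsLieAut τ) (hbrρ : IsLieAut ρ)
    (hτ : τ ^ m = 1) (hρ : ρ ^ m = 1) (hcomm : τ * ρ = ρ * τ)
    (r : Q → kˣ) (hr : ∀ α β : Q, r (α + β) = r α * r β)
    (hAd : ∀ (α : Q), ∀ x ∈ G α, ρ x = ((r α : k)) • x)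
    (τhat : Q ≃+ Q)
    (hτhat : ∀ α : Q, Submodule.map (τ : g →ₗ[k] g) (G α) = G (τhat α))
    (hroots : ∀ d : ℕ, 0 < d → ∃ ξ : k, IsPrimitiveRoot ξ (d * m) ∧ ξ ^ d = ζ) :
    ∃ e : ↥(loopAlgebra m ζ (hζ.ne_zero hm.ne') hζ.pow_eq_one (τ * ρ) (hbrτ.mul hbrρ)
            (by rw [Commute.mul_pow (show Commute τ ρ from hcomm), hτ, hρ, mul_one]))
          ≃ₗ[↥(Rsub k m)]
        ↥(loopAlgebra m ζ (hζ.ne_zero hm.ne') hζ.pow_eq_one τ hbrτ hτ),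
      ∀ x y, e ⁅x, y⁆ = ⁅e x, e y⁆ := by
  classical
  have hζ0 : ζ ≠ 0 := hζ.ne_zero hm.ne'
  have hζm : ζ ^ m = 1 := hζ.pow_eq_one
  have hmk : (m : k) ≠ 0 := Nat.cast_ne_zero.mpr hm.ne'
  have hτρ : (τ * ρ) ^ m = 1 := by
    rw [Commute.mul_pow (show Commute τ ρ from hcomm), hτ, hρ, mul_one]
  have r0 : r 0 = 1 := by
    have h := hr 0 0
    rw [add_zero] at h
    exact left_eq_mul.mp h
  have rneg : ∀ α, r (-α) = (r α)⁻¹ := by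
    intro α
    have h := hr α (-α)
    rw [add_neg_cancel, r0] at h
    exact eq_inv_of_mul_eq_one_left (by rw [mul_comm]; exact h.symm)
  have hρpow : ∀ (j : ℕ) (α : Q) (x : g), x ∈ G α → (ρ ^ j) x = ((r α : k) ^ j) • x := by
    intro j
    induction j with
    | zero => intro α x _; rw [pow_zero, pow_zero, one_smul]; rfl
    | succ n ih =>
        intro α x hx
        have h1 : (ρ ^ (n + 1)) x = (ρ ^ n) (ρ x) := by rw [pow_succ]; rfl
        have h2 : ρ x ∈ G α := by
          rw [hAd α x hx]
          exact Submodule.smul_mem _ _ hx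
        rw [h1, hAd α x hx, map_smul, ih α x hx, smul_smul, ← pow_succ']
  have hrm : ∀ α, (r α) ^ m = 1 := by
    refine closure_prop hsupport ?_ ?_ ?_ ?_
    · intro α hα
      obtain ⟨x, hxmem, hxne⟩ := (Submodule.ne_bot_iff (G α)).mp hα
      have h1 : (ρ ^ m) x = x := by rw [hρ]; rfl
      have h2 := hρpow m α x hxmem
      rw [h1] at h2
      have h3 : ((r α : k) ^ m - 1) • x = 0 := by rw [sub_smul, ← h2, one_smul, sub_self]
      have h4 : (r α : k) ^ m - 1 = 0 := by
        rcases smul_eq_zero.mp h3 with h | h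
        · exact h
        · exact absurd h hxne
      apply Units.ext
      rw [Units.val_pow_eq_pow_val, Units.val_one]
      exact sub_eq_zero.mp h4
    · rw [r0, one_pow]
    · intro a b ha hb; rw [hr, mul_pow, ha, hb, one_mul]
    · intro a ha; rw [rneg, inv_pow, ha, inv_one]
  have hτmem : ∀ (α : Q) (x : g), x ∈ G α → τ x ∈ G (τhat α) := by
    intro α x hx
    rw [← hτhat α]
    exact ⟨x, hx, rfl⟩
  have hrinv : ∀ α, r (τhat α) = r α := by
    refine closure_prop hsupport ?_ ?_ ?_ ?_
    · intro α hα
      obtain ⟨x, hxmem, hxne⟩ := (Submodule.ne_bot_iff (G α)).mp hα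
      have h1 : (τ * ρ) x = (ρ * τ) x := by rw [hcomm]
      have h2 : (τ * ρ) x = (r α : k) • τ x := by
        show τ (ρ x) = _
        rw [hAd α x hxmem, map_smul]
      have h3 : (ρ * τ) x = (r (τhat α) : k) • τ x := by
        show ρ (τ x) = _
        exact hAd (τhat α) (τ x) (hτmem α x hxmem)
      have hτx : τ x ≠ 0 := fun h => hxne (by rwa [LinearEquiv.map_eq_zero_iff] at h)
      have h4 : ((r (τhat α) : k) - (r α : k)) • τ x = 0 := by
        rw [sub_smul, ← h3, ← h2, h1, sub_self]
      have h5 : (r (τhat α) : k) - (r α : k) = 0 := by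
        rcases smul_eq_zero.mp h4 with h | h
        · exact h
        · exact absurd h hτx
      exact Units.ext (sub_eq_zero.mp h5)
    · rw [map_zero]
    · intro a b ha hb; rw [map_add, hr, hr, ha, hb]
    · intro a ha; rw [map_neg, rneg, rneg, ha]
  have hGpow : ∀ (j : ℕ) (α : Q),
      Submodule.map ((τ ^ j : g ≃ₗ[k] g) : g →ₗ[k] g) (G α) = G ((⇑τhat)^[j] α) := by
    intro j
    induction j with
    | zero =>
        intro α
        have hco : ((τ ^ 0 : g ≃ₗ[k] g) : g →ₗ[k] g) = LinearMap.id := by ext x; rfl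
        rw [hco, Submodule.map_id]
        rfl
    | succ n ih =>
        intro α
        have hco : ((τ ^ (n + 1) : g ≃ₗ[k] g) : g →ₗ[k] g)
            = ((τ : g →ₗ[k] g).comp ((τ ^ n : g ≃ₗ[k] g) : g →ₗ[k] g)) := by
          ext x
          show (τ ^ (n + 1)) x = τ ((τ ^ n) x)
          rw [pow_succ']
          rfl
        rw [hco, Submodule.map_comp, ih, hτhat, Function.iterate_succ_apply']
  have hφm : ∀ α, (⇑τhat)^[m] α = α := by
    refine closure_prop hsupport ?_ ?_ ?_ ?_
    · intro α hα
      have h1 : G ((⇑τhat)^[m] α) = G α := by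
        rw [← hGpow m α, hτ]
        have hco : ((1 : g ≃ₗ[k] g) : g →ₗ[k] g) = LinearMap.id := by ext x; rfl
        rw [hco, Submodule.map_id]
      by_contra hne
      have hdisj : Disjoint (G ((⇑τhat)^[m] α)) (G α) :=
        hinternal.submodule_iSupIndep.pairwiseDisjoint hne
      rw [h1] at hdisj
      exact hα (disjoint_self.mp hdisj)
    · exact iterate_zero' τhat m
    · intro a b ha hb
      rw [iterate_add τhat m, ha, hb]
    · intro a ha
      rw [iterate_neg τhat m, ha]
  obtain ⟨s, ν, hs, hνadd, hνinv, hE⟩ := exists_s_nu m hm hζ τhat hφm r hr hrm hrinv hroots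
  set w := wMap G hinternal s ν with hwdef
  set w' := wMap G hinternal (fun α => (s α)⁻¹) (fun α => -(ν α)) with hw'def
  have hw'w : ∀ a, w' (w a) = a :=
    wMap_cancel G hinternal s (fun α => (s α)⁻¹) ν (fun α => -(ν α))
      (fun α => by
        rw [Units.val_inv_eq_inv_val]
        exact inv_mul_cancel₀ (Units.ne_zero _))
      (fun α => by ring)
  have hww' : ∀ a, w (w' a) = a :=
    wMap_cancel G hinternal (fun α => (s α)⁻¹) s (fun α => -(ν α)) ν
      (fun α => by
        rw [Units.val_inv_eq_inv_val]
        exact mul_inv_cancel₀ (Units.ne_zero _))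
      (fun α => by ring)
  have hbrw := wMap_bracket G hinternal hgraded s ν hs hνadd
  have htw := wMap_twist G hζ0 hinternal τ ρ τhat r s ν hτmem hAd hνinv hE
  have htw' : ∀ a, w' (twistEnd (Units.mk0 ζ hζ0)⁻¹ τ a)
      = twistEnd (Units.mk0 ζ hζ0)⁻¹ (τ * ρ) (w' a) := by
    intro a
    calc w' (twistEnd (Units.mk0 ζ hζ0)⁻¹ τ a)
        = w' (twistEnd (Units.mk0 ζ hζ0)⁻¹ τ (w (w' a))) := by rw [hww' a]
      _ = w' (w (twistEnd (Units.mk0 ζ hζ0)⁻¹ (τ * ρ) (w' a))) := by rw [htw]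
      _ = twistEnd (Units.mk0 ζ hζ0)⁻¹ (τ * ρ) (w' a) := hw'w _
  have hmem1 : ∀ a ∈ loopCarrier ζ (τ * ρ), w a ∈ loopCarrier ζ τ := by
    intro a ha
    apply fixed_mem_carrier (m := m) hζ0 hζm hmk τ hτ
    rw [← htw a, carrier_fixed hζ0 (τ * ρ) ha]
  have hmem2 : ∀ a ∈ loopCarrier ζ τ, w' a ∈ loopCarrier ζ (τ * ρ) := by
    intro a ha
    apply fixed_mem_carrier (m := m) hζ0 hζm hmk (τ * ρ) hτρ
    rw [← htw' a, carrier_fixed hζ0 τ ha]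
  let E : ↥(loopAlgebra m ζ (hζ.ne_zero hm.ne') hζ.pow_eq_one (τ * ρ) (hbrτ.mul hbrρ)
        (by rw [Commute.mul_pow (show Commute τ ρ from hcomm), hτ, hρ, mul_one]))
      ≃ₗ[↥(Rsub k m)]
      ↥(loopAlgebra m ζ (hζ.ne_zero hm.ne') hζ.pow_eq_one τ hbrτ hτ) :=
    { toFun := fun x => ⟨w x.1, mem_loopAlgebra_iff.mpr (hmem1 x.1 (mem_loopAlgebra_iff.mp x.2))⟩
      map_add' := fun x y => Subtype.ext (map_add w x.1 y.1)
      map_smul' := fun c x => Subtype.ext (map_smul w (c : LaurentPolynomial k) x.1)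
      invFun := fun y => ⟨w' y.1, mem_loopAlgebra_iff.mpr (hmem2 y.1 (mem_loopAlgebra_iff.mp y.2))⟩
      left_inv := fun x => Subtype.ext (hw'w x.1)
      right_inv := fun y => Subtype.ext (hww' y.1) }
  refine ⟨E, fun x y => Subtype.ext ?_⟩
  show w (↑⁅x, y⁆) = ↑⁅E x, E y⁆
  rw [LieSubalgebra.coe_bracket, LieSubalgebra.coe_bracket]
  exact hbrw x.1 y.1

end LoopPaper
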